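/- Let u, v ∈ ℝ^{d_in} be fixed vectors, let W ∈ ℝ^{d_out × d_in} have independent entries W_{k,l} ~ N(0, 1/d_out), and let b ∈ ℝ^{d_out} have independent entries b_k ~ N(0, 1/d_out), with W and b independent. Then E[φ(Wu + b)ᵀ φ(Wv + b)] ≥ (1 + ⟨u,v⟩)/2. -/

import Mathlib

open MeasureTheory ProbabilityTheory Real Matrix NNReal
open scoped ENNReal

noncomputable section

set_option linter.unusedSectionVars false
set_option linter.unreachableTactic false
set_option linter.unusedTactic false

/-- The ReLU activation applied elementwise to a vector. -/
def reluV {n : ℕ} (x : Fin n → ℝ) : Fin n → ℝ := fun i => max (x i) 0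

lemma gauss_integral_eq {v : ℝ≥0} (hv : v ≠ 0) (g : ℝ → ℝ) :
    ∫ x, g x ∂(gaussianReal 0 v) = ∫ x, gaussianPDFReal 0 v x * g x := by
  rw [gaussianReal_of_var_ne_zero _ hv]
  have h1 : gaussianPDF 0 v = fun x => ((gaussianPDFReal 0 v x).toNNReal : ℝ≥0∞) := rfl
  rw [h1, integral_withDensity_eq_integral_smul
    ((measurable_gaussianPDFReal 0 v).real_toNNReal) g]
  congr 1
  ext x
  rw [NNReal.smul_def, smul_eq_mul, Real.coe_toNNReal _ (gaussianPDFReal_nonneg 0 v x)]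

lemma gauss_integrable_iff {v : ℝ≥0} (hv : v ≠ 0) (g : ℝ → ℝ) :
    Integrable g (gaussianReal 0 v) ↔ Integrable (fun x => gaussianPDFReal 0 v x * g x) := by
  rw [gaussianReal_of_var_ne_zero _ hv]
  have h1 : gaussianPDF 0 v = fun x => ((gaussianPDFReal 0 v x).toNNReal : ℝ≥0∞) := rfl
  rw [h1, integrable_withDensity_iff_integrable_smul
    ((measurable_gaussianPDFReal 0 v).real_toNNReal)]
  constructor <;> intro h <;> refine h.congr (Filter.Eventually.of_forall fun x => ?_) <;>
    simp only [NNReal.smul_def, smul_eq_mul, Real.coe_toNNReal _ (gaussianPDFReal_nonneg 0 v x)]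

lemma pdf_arg_eq {v : ℝ≥0} (hv : v ≠ 0) (x : ℝ) :
    gaussianPDFReal 0 v x = (√(2 * π * v))⁻¹ * rexp (-((2 * (v:ℝ))⁻¹) * x ^ 2) := by
  have hv' : (0:ℝ) < v := lt_of_le_of_ne v.coe_nonneg (by exact_mod_cast hv.symm)
  rw [gaussianPDFReal]
  congr 1
  rw [sub_zero]
  congr 1
  field_simp

lemma gauss_int1 {v : ℝ≥0} (hv : v ≠ 0) :
    Integrable (fun x : ℝ => x) (gaussianReal 0 v) := by
  have hv' : (0:ℝ) < v := lt_of_le_of_ne v.coe_nonneg (by exact_mod_cast hv.symm)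
  have hb : (0:ℝ) < (2 * (v:ℝ))⁻¹ := by positivity
  rw [gauss_integrable_iff hv]
  have : (fun x : ℝ => gaussianPDFReal 0 v x * x)
      = fun x => (√(2 * π * v))⁻¹ * (x * rexp (-((2 * (v:ℝ))⁻¹) * x ^ 2)) := by
    ext x; rw [pdf_arg_eq hv]; ring
  rw [this]
  exact (integrable_mul_exp_neg_mul_sq hb).const_mul _

lemma gauss_int2 {v : ℝ≥0} (hv : v ≠ 0) :
    Integrable (fun x : ℝ => x ^ 2) (gaussianReal 0 v) := by
  have hv' : (0:ℝ) < v := lt_of_le_of_ne v.coe_nonneg (by exact_mod_cast hv.symm)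
  have hb : (0:ℝ) < (2 * (v:ℝ))⁻¹ := by positivity
  rw [gauss_integrable_iff hv]
  have : (fun x : ℝ => gaussianPDFReal 0 v x * x ^ 2)
      = fun x => (√(2 * π * v))⁻¹ * (x ^ (2:ℝ) * rexp (-((2 * (v:ℝ))⁻¹) * x ^ 2)) := by
    ext x; rw [pdf_arg_eq hv, show ((2:ℝ)) = ((2:ℕ):ℝ) by norm_num, Real.rpow_natCast]; ring
  rw [this]
  exact (integrable_rpow_mul_exp_neg_mul_sq hb (by norm_num : (-1:ℝ) < 2)).const_mul _

lemma gauss_mean {v : ℝ≥0} (hv : v ≠ 0) :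
    ∫ x, x ∂(gaussianReal 0 v) = 0 := by
  rw [gauss_integral_eq hv]
  have hsym : ∫ x : ℝ, gaussianPDFReal 0 v x * x
      = ∫ x : ℝ, gaussianPDFReal 0 v (-x) * (-x) := by
    exact ((Measure.measurePreserving_neg (volume : Measure ℝ)).integral_comp
      (Homeomorph.neg ℝ).measurableEmbedding _).symm
  have heven : ∀ x : ℝ, gaussianPDFReal 0 v (-x) = gaussianPDFReal 0 v x := by
    intro x; rw [pdf_arg_eq hv, pdf_arg_eq hv, neg_pow]; ring_nf
  have : ∫ x : ℝ, gaussianPDFReal 0 v x * x = - ∫ x : ℝ, gaussianPDFReal 0 v x * x := by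
    nth_rewrite 1 [hsym]
    simp_rw [heven, mul_neg, integral_neg]
  linarith

lemma integral_sq_exp {b : ℝ} (hb : 0 < b) :
    ∫ x : ℝ, x ^ 2 * rexp (-b * x ^ 2) = b ^ (-(3:ℝ)/2) * √π / 2 := by
  have hint : Integrable (fun x : ℝ => x ^ 2 * rexp (-b * x ^ 2)) := by
    have := integrable_rpow_mul_exp_neg_mul_sq hb (by norm_num : (-1:ℝ) < 2)
    refine this.congr (Filter.Eventually.of_forall fun x => ?_)
    simp only []
    norm_num [Real.rpow_natCast]
  have hIoi : ∫ x in Set.Ioi (0:ℝ), x ^ 2 * rexp (-b * x ^ 2)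
      = b ^ (-(3:ℝ)/2) * (1/2) * Real.Gamma ((3:ℝ)/2) := by
    have h := integral_rpow_mul_exp_neg_mul_rpow (p := 2) (q := 2)
      (by norm_num : (0:ℝ) < 2) (by norm_num : (-1:ℝ) < 2) hb
    have heq : (fun x : ℝ => x ^ (2:ℝ) * rexp (-b * x ^ (2:ℝ)))
        = fun x : ℝ => x ^ 2 * rexp (-b * x ^ 2) := by
      ext x
      rw [show ((2:ℝ)) = ((2:ℕ):ℝ) by norm_num, Real.rpow_natCast]
    rw [heq] at h
    rw [h]
    norm_num
  have hIic : ∫ x in Set.Iic (0:ℝ), x ^ 2 * rexp (-b * x ^ 2)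
      = ∫ x in Set.Ioi (0:ℝ), x ^ 2 * rexp (-b * x ^ 2) := by
    have h := integral_comp_neg_Ioi (0:ℝ) (fun x : ℝ => x ^ 2 * rexp (-b * x ^ 2))
    simp only [neg_zero, neg_sq] at h
    exact h.symm
  have htot := intervalIntegral.integral_Iic_add_Ioi (b := (0:ℝ))
    (hint.integrableOn) (hint.integrableOn)
  have hGamma : Real.Gamma ((3:ℝ)/2) = √π / 2 := by
    rw [show ((3:ℝ)/2) = 1/2 + 1 by norm_num, Real.Gamma_add_one (by norm_num),
      Real.Gamma_one_half_eq]
    ring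
  rw [← htot, hIic, hIoi, hGamma]
  ring

lemma gauss_var {v : ℝ≥0} (hv : v ≠ 0) :
    ∫ x, x ^ 2 ∂(gaussianReal 0 v) = v := by
  have hv' : (0:ℝ) < v := lt_of_le_of_ne v.coe_nonneg (by exact_mod_cast hv.symm)
  have hb : (0:ℝ) < (2 * (v:ℝ))⁻¹ := by positivity
  rw [gauss_integral_eq hv]
  have : (fun x : ℝ => gaussianPDFReal 0 v x * x ^ 2)
      = fun x => (√(2 * π * v))⁻¹ * (x ^ 2 * rexp (-((2 * (v:ℝ))⁻¹) * x ^ 2)) := by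
    ext x; rw [pdf_arg_eq hv]; ring
  rw [this, integral_const_mul, integral_sq_exp hb]
  have h1 : ((2 * (v:ℝ))⁻¹) ^ (-(3:ℝ)/2) = (2 * (v:ℝ)) ^ ((3:ℝ)/2) := by
    rw [← Real.rpow_neg_one, ← Real.rpow_mul (by positivity)]
    norm_num
  have h2 : (2 * (v:ℝ)) ^ ((3:ℝ)/2) = (2 * (v:ℝ)) * √(2 * (v:ℝ)) := by
    rw [show ((3:ℝ)/2) = 1 + 1/2 by norm_num, Real.rpow_add (by positivity), Real.rpow_one,
      Real.sqrt_eq_rpow]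
  have h3 : √(2 * π * (v:ℝ)) = √π * √(2 * (v:ℝ)) := by
    rw [show 2 * π * (v:ℝ) = π * (2 * v) by ring, Real.sqrt_mul Real.pi_pos.le]
  rw [h1, h2, h3]
  have hs : √(2 * (v:ℝ)) ≠ 0 := by positivity
  have hp : √π ≠ 0 := by positivity
  field_simp

section SumProd

variable {Ω : Type*} [MeasurableSpace Ω] {μ : Measure Ω} {ι : Type*} [Fintype ι]

lemma expand_sum_mul (f : ι → Ω → ℝ) (c d : ι → ℝ) :
    (fun ω => (∑ i, c i * f i ω) * (∑ j, d j * f j ω))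
      = fun ω => ∑ i, ∑ j, (c i * d j) * (f i ω * f j ω) := by
  ext ω
  rw [Finset.sum_mul_sum]
  exact Finset.sum_congr rfl fun i _ => Finset.sum_congr rfl fun j _ => by ring

lemma sum_mul_sum_integrable (f : ι → Ω → ℝ) (c d : ι → ℝ)
    (hint : ∀ i, Integrable (f i) μ)
    (hsq : ∀ i, Integrable (fun ω => f i ω * f i ω) μ)
    (hind : ∀ i j, i ≠ j → IndepFun (f i) (f j) μ) :
    Integrable (fun ω => (∑ i, c i * f i ω) * (∑ j, d j * f j ω)) μ := by
  rw [expand_sum_mul]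
  refine integrable_finset_sum _ fun i _ => integrable_finset_sum _ fun j _ => ?_
  by_cases hij : i = j
  · subst hij; exact (hsq i).const_mul _
  · have h := (hind i j hij).integrable_mul (hint i) (hint j)
    exact (h.congr (Filter.Eventually.of_forall fun ω => rfl)).const_mul _

lemma sum_mul_sum_integral [DecidableEq ι] (f : ι → Ω → ℝ) (c d : ι → ℝ) {V : ℝ}
    (hint : ∀ i, Integrable (f i) μ)
    (hsq : ∀ i, Integrable (fun ω => f i ω * f i ω) μ)
    (hind : ∀ i j, i ≠ j → IndepFun (f i) (f j) μ)
    (hmean : ∀ i, ∫ ω, f i ω ∂μ = 0)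
    (hvar : ∀ i, ∫ ω, f i ω * f i ω ∂μ = V) :
    ∫ ω, (∑ i, c i * f i ω) * (∑ j, d j * f j ω) ∂μ = (∑ i, c i * d i) * V := by
  rw [expand_sum_mul]
  have hterm : ∀ i j : ι, Integrable (fun ω => (c i * d j) * (f i ω * f j ω)) μ := by
    intro i j
    by_cases hij : i = j
    · subst hij; exact (hsq i).const_mul _
    · have h := (hind i j hij).integrable_mul (hint i) (hint j)
      exact (h.congr (Filter.Eventually.of_forall fun ω => rfl)).const_mul _
  rw [integral_finset_sum _ fun i _ => integrable_finset_sum _ fun j _ => hterm i j]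
  have : ∀ i : ι, ∫ ω, (∑ j, (c i * d j) * (f i ω * f j ω)) ∂μ
      = ∑ j, ∫ ω, (c i * d j) * (f i ω * f j ω) ∂μ :=
    fun i => integral_finset_sum _ fun j _ => hterm i j
  simp_rw [this]
  have hij : ∀ i j : ι, ∫ ω, (c i * d j) * (f i ω * f j ω) ∂μ
      = if i = j then (c i * d i) * V else 0 := by
    intro i j
    rw [integral_const_mul]
    by_cases h : i = j
    · subst h; rw [hvar i, if_pos rfl]
    · rw [if_neg h]
      have := (hind i j h).integral_fun_mul_eq_mul_integral (hint i).1 (hint j).1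
      rw [this, hmean i, hmean j]
      ring
  simp_rw [hij]
  rw [Finset.sum_mul]
  exact Finset.sum_congr rfl fun i _ => by rw [Finset.sum_ite_eq Finset.univ i]; simp

end SumProd

lemma gauss_neg (v : ℝ≥0) :
    (gaussianReal 0 v).map (fun x : ℝ => -x) = gaussianReal 0 v := by
  have h : (fun x : ℝ => -x) = fun x : ℝ => (-1 : ℝ) * x := by ext x; ring
  rw [h, gaussianReal_map_const_mul]
  norm_num

lemma pi_gauss_neg {ι : Type*} [Fintype ι] (v : ℝ≥0) :
    (Measure.pi (fun _ : ι => gaussianReal 0 v)).map (fun x i => - x i)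
      = Measure.pi (fun _ : ι => gaussianReal 0 v) := by
  have hmeas : Measurable (fun (x : ι → ℝ) i => - x i) :=
    measurable_pi_lambda _ fun i => (measurable_pi_apply i).neg
  symm
  apply Measure.pi_eq
  intro s hs
  rw [Measure.map_apply hmeas (MeasurableSet.univ_pi hs)]
  have hpre : (fun (x : ι → ℝ) i => - x i) ⁻¹' (Set.pi Set.univ s)
      = Set.pi Set.univ (fun i => (fun a : ℝ => -a) ⁻¹' s i) := by
    ext x; simp [Set.mem_pi]
  rw [hpre, Measure.pi_pi]
  refine Finset.prod_congr rfl fun i _ => ?_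
  rw [← Measure.map_apply measurable_neg (hs i)]
  congr 1
  exact gauss_neg v

section RV

variable {Ω : Type*} [MeasurableSpace Ω] {μ : Measure Ω} {X : Ω → ℝ} {v : ℝ≥0}

lemma rv_integrable (hX : Measurable X) (hv : v ≠ 0)
    (hlaw : μ.map X = gaussianReal 0 v) : Integrable X μ := by
  have h : Integrable (fun x : ℝ => x) (μ.map X) := hlaw ▸ gauss_int1 hv
  exact (integrable_map_measure aestronglyMeasurable_id hX.aemeasurable).mp h

lemma rv_sq_integrable (hX : Measurable X) (hv : v ≠ 0)
    (hlaw : μ.map X = gaussianReal 0 v) : Integrable (fun ω => X ω * X ω) μ := by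
  have h : Integrable (fun x : ℝ => x ^ 2) (μ.map X) := hlaw ▸ gauss_int2 hv
  have h2 := (integrable_map_measure (by fun_prop) hX.aemeasurable).mp h
  exact h2.congr (Filter.Eventually.of_forall fun ω => by simp [Function.comp, sq])

lemma rv_mean (hX : Measurable X) (hv : v ≠ 0)
    (hlaw : μ.map X = gaussianReal 0 v) : ∫ ω, X ω ∂μ = 0 := by
  have h := integral_map (μ := μ) (φ := X) (f := fun x : ℝ => x) hX.aemeasurable aestronglyMeasurable_id
  rw [hlaw, gauss_mean hv] at h
  exact h.symm

lemma rv_var (hX : Measurable X) (hv : v ≠ 0)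
    (hlaw : μ.map X = gaussianReal 0 v) : ∫ ω, X ω * X ω ∂μ = v := by
  have h := integral_map (μ := μ) (φ := X) (f := fun x : ℝ => x ^ 2) hX.aemeasurable
    (by fun_prop : AEStronglyMeasurable (fun x : ℝ => x ^ 2) (μ.map X))
  rw [hlaw, gauss_var hv] at h
  rw [show (fun ω => X ω * X ω) = fun ω => X ω ^ 2 from funext fun ω => (sq (X ω)).symm]
  exact h.symm

end RV

lemma relu_bound (x y : ℝ) : |max x 0 * max y 0| ≤ x * x + y * y := by
  rw [abs_of_nonneg (mul_nonneg (le_max_right _ _) (le_max_right _ _))]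
  have hx : max x 0 ≤ |x| := max_le (le_abs_self x) (abs_nonneg x)
  have hy : max y 0 ≤ |y| := max_le (le_abs_self y) (abs_nonneg y)
  have h1 : max x 0 * max y 0 ≤ |x| * |y| :=
    mul_le_mul hx hy (le_max_right _ _) (abs_nonneg x)
  nlinarith [sq_nonneg (|x| - |y|), sq_abs x, sq_abs y]

lemma relu_ineq (x y : ℝ) : x * y ≤ max x 0 * max y 0 + max (-x) 0 * max (-y) 0 := by
  rcases le_total x 0 with hx | hx <;> rcases le_total y 0 with hy | hy
  · rw [max_eq_right hx, max_eq_right hy, max_eq_left (neg_nonneg.2 hx),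
      max_eq_left (neg_nonneg.2 hy)]
    nlinarith
  · rw [max_eq_right hx, max_eq_left hy, max_eq_left (neg_nonneg.2 hx),
      max_eq_right (neg_nonpos.2 hy)]
    nlinarith
  · rw [max_eq_left hx, max_eq_right hy, max_eq_right (neg_nonpos.2 hx),
      max_eq_left (neg_nonneg.2 hy)]
    nlinarith
  · rw [max_eq_left hx, max_eq_left hy, max_eq_right (neg_nonpos.2 hx),
      max_eq_right (neg_nonpos.2 hy)]
    nlinarith

set_option maxHeartbeats 1000000 in
/-- Let `u, v ∈ ℝ^{d_in}` be fixed, let `W ∈ ℝ^{d_out × d_in}` have jointly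
independent entries `W_{k,l} ~ N(0, 1/d_out)` and `b_k ~ N(0, 1/d_out)`, with `W` and `b` independent. Then
`E[φ(Wu + b)ᵀ φ(Wv + b)] ≥ (1 + ⟨u,v⟩)/2`. -/
theorem statement10
    {Ω : Type*} [MeasurableSpace Ω] (μ : Measure Ω) [IsProbabilityMeasure μ]
    (d_in d_out : ℕ) (hdout : 0 < d_out)
    (W : Ω → Matrix (Fin d_out) (Fin d_in) ℝ) (b : Ω → Fin d_out → ℝ)
    (hWmeas : ∀ k l, Measurable fun ω => W ω k l)
    (hbmeas : ∀ k, Measurable fun ω => b ω k)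
    (hWlaw : ∀ k l, Measure.map (fun ω => W ω k l) μ = gaussianReal 0 (d_out : ℝ≥0)⁻¹)
    (hblaw : ∀ k, Measure.map (fun ω => b ω k) μ = gaussianReal 0 (d_out : ℝ≥0)⁻¹)
    (hindep : iIndepFun
      (Sum.elim (fun (kl : Fin d_out × Fin d_in) (ω : Ω) => W ω kl.1 kl.2)
        (fun (k : Fin d_out) (ω : Ω) => b ω k)) μ)
    (u v : Fin d_in → ℝ) :
    (1 + u ⬝ᵥ v) / 2 ≤ ∫ ω, reluV ((W ω).mulVec u + b ω) ⬝ᵥ reluV ((W ω).mulVec v + b ω) ∂μ := by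
  classical
  have hd0 : (d_out : ℝ≥0) ≠ 0 := Nat.cast_ne_zero.mpr hdout.ne'
  set σ : ℝ≥0 := (d_out : ℝ≥0)⁻¹ with hσdef
  have hσ : σ ≠ 0 := inv_ne_zero hd0
  set f : (Fin d_out × Fin d_in) ⊕ Fin d_out → Ω → ℝ :=
    Sum.elim (fun (kl : Fin d_out × Fin d_in) (ω : Ω) => W ω kl.1 kl.2)
      (fun (k : Fin d_out) (ω : Ω) => b ω k) with hfdef
  have hfm : ∀ i, Measurable (f i) := by rintro (⟨k, l⟩ | k); exacts [hWmeas k l, hbmeas k]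
  have hflaw : ∀ i, μ.map (f i) = gaussianReal 0 σ := by
    rintro (⟨k, l⟩ | k); exacts [hWlaw k l, hblaw k]
  have hfint : ∀ i, Integrable (f i) μ := fun i => rv_integrable (hfm i) hσ (hflaw i)
  have hfsq : ∀ i, Integrable (fun ω => f i ω * f i ω) μ :=
    fun i => rv_sq_integrable (hfm i) hσ (hflaw i)
  have hfmean : ∀ i, ∫ ω, f i ω ∂μ = 0 := fun i => rv_mean (hfm i) hσ (hflaw i)
  have hfvar : ∀ i, ∫ ω, f i ω * f i ω ∂μ = (σ : ℝ) := fun i => rv_var (hfm i) hσ (hflaw i)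
  have hpairind : ∀ i j, i ≠ j → IndepFun (f i) (f j) μ := fun i j hij => hindep.indepFun hij
  -- per-k families
  set fk : Fin d_out → (Fin d_in ⊕ Unit) → Ω → ℝ :=
    fun k => Sum.elim (fun l => f (Sum.inl (k, l))) (fun _ => f (Sum.inr k)) with hfkdef
  set cu : Fin d_in ⊕ Unit → ℝ := Sum.elim u (fun _ => 1) with hcudef
  set cv : Fin d_in ⊕ Unit → ℝ := Sum.elim v (fun _ => 1) with hcvdef
  have hfkm : ∀ k i, Measurable (fk k i) := by
    rintro k (l | ⟨⟩)
    exacts [hfm (Sum.inl (k, l)), hfm (Sum.inr k)]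
  have hfkint : ∀ k i, Integrable (fk k i) μ := by
    rintro k (l | ⟨⟩)
    exacts [hfint (Sum.inl (k, l)), hfint (Sum.inr k)]
  have hfksq : ∀ k i, Integrable (fun ω => fk k i ω * fk k i ω) μ := by
    rintro k (l | ⟨⟩)
    exacts [hfsq (Sum.inl (k, l)), hfsq (Sum.inr k)]
  have hfkmean : ∀ k i, ∫ ω, fk k i ω ∂μ = 0 := by
    rintro k (l | ⟨⟩)
    exacts [hfmean (Sum.inl (k, l)), hfmean (Sum.inr k)]
  have hfkvar : ∀ k i, ∫ ω, fk k i ω * fk k i ω ∂μ = (σ : ℝ) := by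
    rintro k (l | ⟨⟩)
    exacts [hfvar (Sum.inl (k, l)), hfvar (Sum.inr k)]
  have hfkind : ∀ k, ∀ i j, i ≠ j → IndepFun (fk k i) (fk k j) μ := by
    intro k i j hij
    have he : ∀ i : Fin d_in ⊕ Unit,
        fk k i = f ((Sum.elim (fun l => Sum.inl (k, l)) (fun _ => Sum.inr k) :
          Fin d_in ⊕ Unit → (Fin d_out × Fin d_in) ⊕ Fin d_out) i) := by
      rintro (l | ⟨⟩) <;> rfl
    rw [he i, he j]
    refine hpairind _ _ ?_
    rcases i with l | ⟨⟩ <;> rcases j with l' | ⟨⟩ <;> simp_all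
  -- S and T
  set S : Fin d_out → Ω → ℝ := fun k ω => ∑ i, cu i * fk k i ω with hSdef
  set T : Fin d_out → Ω → ℝ := fun k ω => ∑ i, cv i * fk k i ω with hTdef
  have hSk : ∀ k ω, ((W ω).mulVec u + b ω) k = S k ω := by
    intro k ω
    simp [hSdef, hcudef, hfkdef, hfdef, Matrix.mulVec, dotProduct,
      Fintype.sum_sum_type, mul_comm]
  have hTk : ∀ k ω, ((W ω).mulVec v + b ω) k = T k ω := by
    intro k ω
    simp [hTdef, hcvdef, hfkdef, hfdef, Matrix.mulVec, dotProduct,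
      Fintype.sum_sum_type, mul_comm]
  -- integrability and moments of products
  have hSTint : ∀ k, Integrable (fun ω => S k ω * T k ω) μ := fun k =>
    sum_mul_sum_integrable (fk k) cu cv (hfkint k) (hfksq k) (hfkind k)
  have hSSint : ∀ k, Integrable (fun ω => S k ω * S k ω) μ := fun k =>
    sum_mul_sum_integrable (fk k) cu cu (hfkint k) (hfksq k) (hfkind k)
  have hTTint : ∀ k, Integrable (fun ω => T k ω * T k ω) μ := fun k =>
    sum_mul_sum_integrable (fk k) cv cv (hfkint k) (hfksq k) (hfkind k)
  have hSTval : ∀ k, ∫ ω, S k ω * T k ω ∂μ = (u ⬝ᵥ v + 1) * (σ : ℝ) := by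
    intro k
    rw [hSdef, hTdef, sum_mul_sum_integral (fk k) cu cv (hfkint k) (hfksq k) (hfkind k)
      (hfkmean k) (hfkvar k)]
    congr 1
    simp [hcudef, hcvdef, Fintype.sum_sum_type, dotProduct]
  have hSTsum_int : Integrable (fun ω => ∑ k, S k ω * T k ω) μ :=
    integrable_finset_sum _ fun k _ => hSTint k
  have hSTsum : ∫ ω, (∑ k, S k ω * T k ω) ∂μ = 1 + u ⬝ᵥ v := by
    rw [integral_finset_sum _ fun k _ => hSTint k]
    simp_rw [hSTval]
    rw [Finset.sum_const, Finset.card_univ, Fintype.card_fin, nsmul_eq_mul]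
    have hcoe : (σ : ℝ) = (d_out : ℝ)⁻¹ := by
      rw [hσdef]; push_cast; ring
    rw [hcoe]
    have : (d_out : ℝ) ≠ 0 := Nat.cast_ne_zero.mpr hdout.ne'
    field_simp
    ring
  -- positive and negative relu sums
  set gpos : Ω → ℝ := fun ω => ∑ k, max (S k ω) 0 * max (T k ω) 0 with hgposdef
  set gneg : Ω → ℝ := fun ω => ∑ k, max (-(S k ω)) 0 * max (-(T k ω)) 0 with hgnegdef
  have hSmeas : ∀ k, Measurable (S k) := fun k =>
    Finset.measurable_sum _ fun i _ => (hfkm k i).const_mul _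
  have hTmeas : ∀ k, Measurable (T k) := fun k =>
    Finset.measurable_sum _ fun i _ => (hfkm k i).const_mul _
  have hgposmeas : Measurable gpos :=
    Finset.measurable_sum _ fun k _ =>
      ((hSmeas k).max measurable_const).mul ((hTmeas k).max measurable_const)
  have hgnegmeas : Measurable gneg :=
    Finset.measurable_sum _ fun k _ =>
      ((hSmeas k).neg.max measurable_const).mul ((hTmeas k).neg.max measurable_const)
  have hDint : Integrable (fun ω => ∑ k, (S k ω * S k ω + T k ω * T k ω)) μ :=
    integrable_finset_sum _ fun k _ => (hSSint k).add (hTTint k)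
  have hgposint : Integrable gpos μ := by
    refine hDint.mono' hgposmeas.aestronglyMeasurable (Filter.Eventually.of_forall fun ω => ?_)
    rw [Real.norm_eq_abs]
    calc |gpos ω| ≤ ∑ k, |max (S k ω) 0 * max (T k ω) 0| := Finset.abs_sum_le_sum_abs _ _
      _ ≤ ∑ k, (S k ω * S k ω + T k ω * T k ω) :=
        Finset.sum_le_sum fun k _ => relu_bound _ _
  have hgnegint : Integrable gneg μ := by
    refine hDint.mono' hgnegmeas.aestronglyMeasurable (Filter.Eventually.of_forall fun ω => ?_)
    rw [Real.norm_eq_abs]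
    calc |gneg ω| ≤ ∑ k, |max (-(S k ω)) 0 * max (-(T k ω)) 0| := Finset.abs_sum_le_sum_abs _ _
      _ ≤ ∑ k, (S k ω * S k ω + T k ω * T k ω) := by
        refine Finset.sum_le_sum fun k _ => ?_
        have := relu_bound (-(S k ω)) (-(T k ω))
        simpa [neg_mul_neg] using this
  have hpt : ∀ ω, (∑ k, S k ω * T k ω) ≤ gpos ω + gneg ω := by
    intro ω
    rw [hgposdef, hgnegdef, ← Finset.sum_add_distrib]
    exact Finset.sum_le_sum fun k _ => relu_ineq _ _
  -- symmetry of the joint law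
  set F : Ω → ((Fin d_out × Fin d_in) ⊕ Fin d_out) → ℝ := fun ω i => f i ω with hFdef
  have hFm : Measurable F := measurable_pi_lambda _ fun i => hfm i
  set G : (((Fin d_out × Fin d_in) ⊕ Fin d_out) → ℝ) → ℝ := fun x => ∑ k,
      max (∑ i, cu i * (Sum.elim (fun l => x (Sum.inl (k, l))) (fun _ => x (Sum.inr k)) i)) 0
    * max (∑ i, cv i * (Sum.elim (fun l => x (Sum.inl (k, l))) (fun _ => x (Sum.inr k)) i)) 0
    with hGdef
  have hGm : Measurable G := by
    refine Finset.measurable_sum _ fun k _ => Measurable.mul ?_ ?_ <;>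
      refine Measurable.max (Finset.measurable_sum _ fun i _ => Measurable.const_mul ?_ _)
        measurable_const <;>
      rcases i with l | ⟨⟩ <;> exact measurable_pi_apply _
  have helimF : ∀ (ω : Ω) (k : Fin d_out) (i : Fin d_in ⊕ Unit),
      Sum.elim (fun l => F ω (Sum.inl (k, l))) (fun _ => F ω (Sum.inr k)) i = fk k i ω := by
    rintro ω k (l | ⟨⟩) <;> rfl
  have hGF : ∀ ω, G (F ω) = gpos ω := by
    intro ω
    rw [hGdef, hgposdef]
    refine Finset.sum_congr rfl fun k _ => ?_
    rw [show (∑ i, cu i * (Sum.elim (fun l => F ω (Sum.inl (k, l)))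
        (fun _ => F ω (Sum.inr k)) i)) = S k ω from
      Finset.sum_congr rfl fun i _ => by rw [helimF ω k i]]
    rw [show (∑ i, cv i * (Sum.elim (fun l => F ω (Sum.inl (k, l)))
        (fun _ => F ω (Sum.inr k)) i)) = T k ω from
      Finset.sum_congr rfl fun i _ => by rw [helimF ω k i]]
  have hGnegF : ∀ ω, G (fun i => -(F ω i)) = gneg ω := by
    intro ω
    rw [hGdef, hgnegdef]
    refine Finset.sum_congr rfl fun k _ => ?_
    have h1 : (∑ i, cu i * (Sum.elim (fun l => -(F ω (Sum.inl (k, l))))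
        (fun _ => -(F ω (Sum.inr k))) i)) = -(S k ω) := by
      rw [hSdef, ← Finset.sum_neg_distrib]
      refine Finset.sum_congr rfl fun i _ => ?_
      rcases i with l | ⟨⟩ <;> simp [hfkdef, hFdef] <;> ring
    have h2 : (∑ i, cv i * (Sum.elim (fun l => -(F ω (Sum.inl (k, l))))
        (fun _ => -(F ω (Sum.inr k))) i)) = -(T k ω) := by
      rw [hTdef, ← Finset.sum_neg_distrib]
      refine Finset.sum_congr rfl fun i _ => ?_
      rcases i with l | ⟨⟩ <;> simp [hfkdef, hFdef] <;> ring
    rw [h1, h2]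
  have hjoint : μ.map F = Measure.pi (fun _ => gaussianReal 0 σ) := by
    symm
    apply Measure.pi_eq
    intro s hs
    rw [Measure.map_apply hFm (MeasurableSet.univ_pi hs)]
    have hpre : F ⁻¹' (Set.pi Set.univ s) = ⋂ i, f i ⁻¹' s i := by
      ext ω; simp [hFdef, Set.mem_pi]
    rw [hpre, show (⋂ i, f i ⁻¹' s i) = ⋂ i ∈ Finset.univ, f i ⁻¹' s i by simp,
      hindep.measure_inter_preimage_eq_mul Finset.univ (fun i _ => hs i)]
    refine Finset.prod_congr rfl fun i _ => ?_
    rw [← Measure.map_apply (hfm i) (hs i), hflaw i]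
  have hnegm : Measurable (fun (x : ((Fin d_out × Fin d_in) ⊕ Fin d_out) → ℝ) i => - x i) :=
    measurable_pi_lambda _ fun i => (measurable_pi_apply i).neg
  have hI1 : ∫ ω, gpos ω ∂μ = ∫ x, G x ∂(Measure.pi fun _ => gaussianReal 0 σ) := by
    have h := integral_map (μ := μ) (φ := F) hFm.aemeasurable
      (hGm.aestronglyMeasurable (μ := μ.map F))
    rw [hjoint] at h
    rw [h]
    exact integral_congr_ae (Filter.Eventually.of_forall fun ω => (hGF ω).symm)
  have hI2 : ∫ ω, gneg ω ∂μ = ∫ x, G x ∂(Measure.pi fun _ => gaussianReal 0 σ) := by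
    set F' : Ω → ((Fin d_out × Fin d_in) ⊕ Fin d_out) → ℝ := fun ω i => -(F ω i) with hF'def
    have hF'm : Measurable F' := measurable_pi_lambda _ fun i => (hfm i).neg
    have hmapF' : μ.map F' = Measure.pi (fun _ => gaussianReal 0 σ) := by
      have hcomp : F' = (fun (x : ((Fin d_out × Fin d_in) ⊕ Fin d_out) → ℝ) i => - x i) ∘ F := rfl
      rw [hcomp, ← Measure.map_map hnegm hFm, hjoint, pi_gauss_neg]
    have h1 := integral_map (μ := μ) (φ := F') hF'm.aemeasurable
      (hGm.aestronglyMeasurable (μ := μ.map F'))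
    rw [hmapF'] at h1
    calc ∫ ω, gneg ω ∂μ = ∫ ω, G (F' ω) ∂μ :=
          integral_congr_ae (Filter.Eventually.of_forall fun ω => (hGnegF ω).symm)
      _ = ∫ x, G x ∂(Measure.pi fun _ => gaussianReal 0 σ) := h1.symm
  have hEqPN : ∫ ω, gneg ω ∂μ = ∫ ω, gpos ω ∂μ := by rw [hI1, hI2]
  have hGoal : ∫ ω, reluV ((W ω).mulVec u + b ω) ⬝ᵥ reluV ((W ω).mulVec v + b ω) ∂μ
      = ∫ ω, gpos ω ∂μ := by
    refine integral_congr_ae (Filter.Eventually.of_forall fun ω => ?_)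
    rw [hgposdef]
    simp only [reluV, dotProduct]
    exact Finset.sum_congr rfl fun k _ => by rw [hSk k ω, hTk k ω]
  rw [hGoal]
  have hle : ∫ ω, (∑ k, S k ω * T k ω) ∂μ ≤ ∫ ω, (gpos ω + gneg ω) ∂μ :=
    integral_mono hSTsum_int (hgposint.add hgnegint) hpt
  rw [integral_add hgposint hgnegint, hSTsum, hEqPN] at hle
  linarith

end
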